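/- Let A be an n×n nonnegative real matrix and for a cyclic permutation σ on a subset {i₁,…,i_m} ⊆ {1,…,n} define μ_σ(A) = (Π_{j=1}^m a_{i_j, σ(i_j)})^{1/m}. Then for every cycle σ, μ_σ(A) ≤ ρ(A), where ρ(A) is the spectral radius of A. -/

import Mathlib

/-- Spectral radius of a real matrix: the supremum of the absolute values of the
(complex) roots of its characteristic polynomial. -/
noncomputable def specRad {n : Type*} [Fintype n] [DecidableEq n]
    (A : Matrix n n ℝ) : ℝ :=
  sSup {r : ℝ | ∃ μ : ℂ, ((A.map (algebraMap ℝ ℂ)).charpoly).IsRoot μ ∧ r = ‖μ‖}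

open Polynomial Matrix Finset

lemma isRoot_charpoly_iff_mem_spectrum {n : Type*} [Fintype n] [DecidableEq n]
    (M : Matrix n n ℂ) (μ : ℂ) : M.charpoly.IsRoot μ ↔ μ ∈ spectrum ℂ M := by
  have h1 : M.charpoly.eval μ = (algebraMap ℂ (Matrix n n ℂ) μ - M).det := by
    rw [Matrix.charpoly, ← Polynomial.coe_evalRingHom, RingHom.map_det]
    congr 1
    ext i j
    by_cases h : i = j <;>
      simp [charmatrix_apply, Matrix.algebraMap_matrix_apply, h, Matrix.diagonal_apply]
  rw [spectrum.mem_iff, Matrix.isUnit_iff_isUnit_det, isUnit_iff_ne_zero, not_not,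
    Polynomial.IsRoot, h1]

/-- product along a walk is at most the corresponding power entry. -/
lemma walk_prod_le {n : ℕ} (A : Matrix (Fin n) (Fin n) ℝ) (hA : ∀ i j, 0 ≤ A i j)
    (hAp : ∀ (N : ℕ) (i j : Fin n), 0 ≤ (A ^ N) i j) :
    ∀ (N : ℕ) (g : ℕ → Fin n),
      ∏ j ∈ Finset.range N, A (g j) (g (j + 1)) ≤ (A ^ N) (g 0) (g N) := by
  intro N
  induction N with
  | zero => intro g; simp [Matrix.one_apply]
  | succ N ih =>
    intro g
    have h1 := ih (fun j => g (j + 1))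
    have h2 : ∏ j ∈ Finset.range (N + 1), A (g j) (g (j + 1)) =
        A (g 0) (g 1) * ∏ j ∈ Finset.range N, A (g (j + 1)) (g (j + 2)) := by
      rw [Finset.prod_range_succ', mul_comm]
    rw [h2, pow_succ']
    calc A (g 0) (g 1) * ∏ j ∈ Finset.range N, A (g (j + 1)) (g (j + 2))
        ≤ A (g 0) (g 1) * (A ^ N) (g 1) (g (N + 1)) := by
          exact mul_le_mul_of_nonneg_left h1 (hA _ _)
      _ ≤ (A * A ^ N) (g 0) (g (N + 1)) := by
          rw [Matrix.mul_apply]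
          exact Finset.single_le_sum (f := fun y => A (g 0) y * (A ^ N) y (g (N + 1)))
            (fun y _ => mul_nonneg (hA _ _) (hAp _ _ _)) (Finset.mem_univ (g 1))

lemma pow_diag_le {n : ℕ} (B : Matrix (Fin n) (Fin n) ℝ)
    (hB : ∀ i j, 0 ≤ B i j) (hBp : ∀ (N : ℕ) (i j : Fin n), 0 ≤ (B ^ N) i j) (x : Fin n) :
    ∀ k : ℕ, (B x x) ^ k ≤ (B ^ k) x x := by
  intro k
  induction k with
  | zero => simp [Matrix.one_apply]
  | succ k ih =>
    rw [pow_succ, pow_succ]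
    calc (B x x) ^ k * B x x ≤ (B ^ k) x x * B x x :=
          mul_le_mul_of_nonneg_right ih (hB _ _)
      _ ≤ (B ^ k * B) x x := by
          rw [Matrix.mul_apply]
          exact Finset.single_le_sum (f := fun y => (B ^ k) x y * B y x)
            (fun y _ => mul_nonneg (hBp _ _ _) (hB _ _)) (Finset.mem_univ x)

open Fin.NatCast in
theorem cycle_mean_le_specRad (n m : ℕ) (A : Matrix (Fin n) (Fin n) ℝ)
    (hA : ∀ i j, 0 ≤ A i j) (f : Fin (m + 1) → Fin n) (hf : Function.Injective f) :
    (∏ j : Fin (m + 1), A (f j) (f (j + 1))) ^ ((1 : ℝ) / (m + 1)) ≤ specRad A := by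
  classical
  have hn : Nonempty (Fin n) := ⟨f 0⟩
  set M : Matrix (Fin n) (Fin n) ℂ := A.map (algebraMap ℝ ℂ) with hM
  set S : Set ℝ := {r : ℝ | ∃ μ : ℂ, (M.charpoly).IsRoot μ ∧ r = ‖μ‖} with hS
  have hρdef : specRad A = sSup S := rfl
  -- S is finite and bounded above
  have hcp_ne : M.charpoly ≠ 0 := (Matrix.charpoly_monic M).ne_zero
  have hSfin : S.Finite := by
    have : S = (fun μ : ℂ => ‖μ‖) '' {μ : ℂ | M.charpoly.IsRoot μ} := by
      ext r; constructor
      · rintro ⟨μ, hμ, rfl⟩; exact ⟨μ, hμ, rfl⟩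
      · rintro ⟨μ, hμ, rfl⟩; exact ⟨μ, hμ, rfl⟩
    rw [this]
    exact (Polynomial.finite_setOf_isRoot hcp_ne).image _
  have hSbdd : BddAbove S := hSfin.bddAbove
  have habs_le : ∀ μ : ℂ, M.charpoly.IsRoot μ → ‖μ‖ ≤ specRad A := by
    intro μ hμ
    exact le_csSup hSbdd ⟨μ, hμ, rfl⟩
  -- spectral radius nonneg
  have hdeg : M.charpoly.natDegree = Fintype.card (Fin n) := Matrix.charpoly_natDegree_eq_dim M
  have hρ0 : 0 ≤ specRad A := by
    have hdpos : 0 < M.charpoly.natDegree := by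
      rw [hdeg]; exact Fintype.card_pos
    obtain ⟨μ0, hμ0⟩ := Complex.exists_root
      (Polynomial.natDegree_pos_iff_degree_pos.mp hdpos)
    exact le_trans (norm_nonneg μ0) (habs_le μ0 hμ0)
  -- trace bound : for all N > 0, trace (A^N) ≤ n * (specRad A)^N
  have hApow : ∀ (N : ℕ) (i j : Fin n), 0 ≤ (A ^ N) i j := by
    intro N
    induction N with
    | zero => intro i j; by_cases h : i = j <;> simp [Matrix.one_apply, h]
    | succ N ih =>
      intro i j
      rw [pow_succ, Matrix.mul_apply]
      exact Finset.sum_nonneg fun y _ => mul_nonneg (ih _ _) (hA _ _)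
  have htrace : ∀ N : ℕ, 0 < N →
      Matrix.trace (A ^ N) ≤ (n : ℝ) * (specRad A) ^ N := by
    intro N hN
    -- complex matrix power
    have hMpow : M ^ N = (A ^ N).map (algebraMap ℝ ℂ) := by
      rw [hM, ← RingHom.mapMatrix_apply, ← RingHom.mapMatrix_apply, map_pow]
    have htr : Matrix.trace (M ^ N) = ((Matrix.trace (A ^ N) : ℝ) : ℂ) := by
      rw [hMpow]
      simp [Matrix.trace, Matrix.map_apply]
    -- each root of charpoly (M^N) has abs ≤ ρ^N
    have hroot : ∀ ν ∈ (M ^ N).charpoly.roots, ‖ν‖ ≤ (specRad A) ^ N := by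
      intro ν hν
      have hν' : (M ^ N).charpoly.IsRoot ν := (Polynomial.mem_roots'.mp hν).2
      rw [isRoot_charpoly_iff_mem_spectrum] at hν'
      rw [spectrum.map_pow_of_pos M hN] at hν'
      obtain ⟨μ, hμ, rfl⟩ := hν'
      rw [norm_pow]
      exact pow_le_pow_left₀ (norm_nonneg μ)
        (habs_le μ ((isRoot_charpoly_iff_mem_spectrum M μ).mpr hμ)) N
    have hsum := Matrix.trace_eq_sum_roots_charpoly (M ^ N)
    have hcard : ((M ^ N).charpoly.roots.card : ℝ) ≤ (n : ℝ) := by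
      have := (M ^ N).charpoly.card_roots'
      rw [Matrix.charpoly_natDegree_eq_dim, Fintype.card_fin] at this
      exact_mod_cast this
    calc Matrix.trace (A ^ N) ≤ |Matrix.trace (A ^ N)| := le_abs_self _
      _ = ‖Matrix.trace (M ^ N)‖ := by rw [htr, Complex.norm_real, Real.norm_eq_abs]
      _ = ‖(M ^ N).charpoly.roots.sum‖ := by rw [hsum]
      _ ≤ (((M ^ N).charpoly.roots).map (fun x : ℂ => ‖x‖)).sum := by
          simpa using norm_multiset_sum_le ((M ^ N).charpoly.roots)
      _ ≤ (((M ^ N).charpoly.roots).map (fun x : ℂ => ‖x‖)).card • ((specRad A) ^ N) := by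
          apply Multiset.sum_le_card_nsmul
          intro x hx
          obtain ⟨ν, hν, rfl⟩ := Multiset.mem_map.mp hx
          exact hroot ν hν
      _ = ((M ^ N).charpoly.roots.card : ℝ) * (specRad A) ^ N := by
          rw [Multiset.card_map, nsmul_eq_mul]
      _ ≤ (n : ℝ) * (specRad A) ^ N :=
          mul_le_mul_of_nonneg_right hcard (pow_nonneg hρ0 N)
  -- cycle product ≤ (A^(m+1)) (f 0) (f 0)
  set c : ℝ := ∏ j : Fin (m + 1), A (f j) (f (j + 1)) with hc
  have hc0 : 0 ≤ c := Finset.prod_nonneg fun j _ => hA _ _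
  set g : ℕ → Fin n := fun j => f ((j : Fin (m + 1))) with hg
  have hcycle : c ≤ (A ^ (m + 1)) (f 0) (f 0) := by
    have h1 : c = ∏ j ∈ Finset.range (m + 1), A (g j) (g (j + 1)) := by
      rw [hc, ← Fin.prod_univ_eq_prod_range (fun j => A (g j) (g (j + 1))) (m + 1)]
      apply Finset.prod_congr rfl
      intro j _
      simp [hg, Fin.cast_val_eq_self]
    have h2 := walk_prod_le A hA hApow (m + 1) g
    rw [← h1] at h2
    have h3 : g 0 = f 0 := by simp [hg]
    have h4 : g (m + 1) = f 0 := by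
      simp only [hg]
      norm_cast
      rw [Fin.natCast_self]
    rwa [h3, h4] at h2
  -- key : ∀ k, c^k ≤ n * (ρ^(m+1))^k
  set B : Matrix (Fin n) (Fin n) ℝ := A ^ (m + 1) with hB
  have hBnn : ∀ i j, 0 ≤ B i j := fun i j => hApow (m + 1) i j
  have hBpow : ∀ (N : ℕ) (i j : Fin n), 0 ≤ (B ^ N) i j := by
    intro N i j; rw [hB, ← pow_mul]; exact hApow _ _ _
  have hn1 : (1:ℝ) ≤ (n:ℝ) := by
    have : 0 < n := Fin.pos (f 0)
    exact_mod_cast this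
  have hkey : ∀ k : ℕ, c ^ k ≤ (n : ℝ) * ((specRad A) ^ (m + 1)) ^ k := by
    intro k
    rcases Nat.eq_zero_or_pos k with rfl | hk
    · simpa using hn1
    calc c ^ k ≤ (B (f 0) (f 0)) ^ k := pow_le_pow_left₀ hc0 hcycle k
      _ ≤ (B ^ k) (f 0) (f 0) := pow_diag_le B hBnn hBpow (f 0) k
      _ ≤ Matrix.trace (B ^ k) := by
          rw [Matrix.trace]
          exact Finset.single_le_sum (fun y _ => hBpow k y y) (Finset.mem_univ (f 0))
      _ = Matrix.trace (A ^ ((m + 1) * k)) := by rw [hB, ← pow_mul]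
      _ ≤ (n : ℝ) * (specRad A) ^ ((m + 1) * k) :=
          htrace _ (Nat.mul_pos (Nat.succ_pos m) hk)
      _ = (n : ℝ) * ((specRad A) ^ (m + 1)) ^ k := by rw [pow_mul]
  -- conclude c ≤ ρ^(m+1)
  have hmain : c ≤ (specRad A) ^ (m + 1) := by
    by_contra h
    push_neg at h
    set r : ℝ := (specRad A) ^ (m + 1) with hr
    have hr0 : 0 ≤ r := pow_nonneg hρ0 _
    have hcpos : 0 < c := lt_of_le_of_lt hr0 h
    rcases eq_or_lt_of_le hr0 with hr0' | hrpos
    · have := hkey 1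
      rw [pow_one, pow_one, ← hr0', mul_zero] at this
      exact absurd this (not_le.mpr hcpos)
    · have hq : 1 < c / r := (one_lt_div hrpos).mpr h
      obtain ⟨k, hk⟩ := pow_unbounded_of_one_lt (n : ℝ) hq
      have hk' : (c / r) ^ k ≤ (n : ℝ) := by
        rw [div_pow, div_le_iff₀ (pow_pos hrpos k)]
        exact hkey k
      exact absurd hk (not_lt.mpr hk')
  -- final rpow step
  have hfin : ((specRad A) ^ (m + 1) : ℝ) ^ ((1 : ℝ) / (m + 1)) = specRad A := by
    rw [one_div]
    have : ((m : ℝ) + 1) = ((m + 1 : ℕ) : ℝ) := by push_cast; ring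
    rw [this]
    exact Real.pow_rpow_inv_natCast hρ0 (Nat.succ_ne_zero m)
  calc c ^ ((1 : ℝ) / (m + 1)) ≤ ((specRad A) ^ (m + 1) : ℝ) ^ ((1 : ℝ) / (m + 1)) :=
        Real.rpow_le_rpow hc0 hmain (by positivity)
    _ = specRad A := hfin
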